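/- Let X be a Banach space satisfying: every weakly null sequence of N-homogeneous polynomials (P_n) and every P_N-weakly convergent sequence x_n → x satisfy P_n(x_n) → 0. Then for any Banach space Y, any weakly compact set K ⊆ Y, and any P_N-weakly compact set J ⊆ X, the set {θ_N(j)⊗k : j ∈ J, k ∈ K} is relatively weakly compact in (⊗̂^N_s X)⊗̂Y. -/

import Mathlib

open Filter Topology

/-- Port helper: the canonical `AddCommGroup` instance (found by `inferInstance`), stated
directly so that instance search no longer has to find it by nested unification. -/
noncomputable instance instAddCommGroupCMMDual (N : ℕ) (X Y : Type*) [NormedAddCommGroup X]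
    [NormedSpace ℂ X] [NormedAddCommGroup Y] [NormedSpace ℂ Y] :
    AddCommGroup (ContinuousMultilinearMap ℂ (fun _ : Fin N => X) (Y →L[ℂ] ℂ)) :=
  inferInstance

/-- The canonical image of the elementary tensor `θ_N(j) ⊗ k` of `(⊗̂^N_s X) ⊗̂ Y` in the
dual of `((⊗̂^N X) ⊗̂ Y)^*`, where the latter dual is realized as the space of bounded
`N`-linear maps from `X` into `Y^*`. -/
noncomputable def deltaTensor (N : ℕ) {X Y : Type*} [NormedAddCommGroup X] [NormedSpace ℂ X]
    [NormedAddCommGroup Y] [NormedSpace ℂ Y] (j : X) (k : Y) :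
    StrongDual ℂ (ContinuousMultilinearMap ℂ (fun _ : Fin N => X) (Y →L[ℂ] ℂ)) :=
  (ContinuousLinearMap.apply ℂ ℂ k).comp
    (ContinuousMultilinearMap.apply ℂ (fun _ : Fin N => X) (Y →L[ℂ] ℂ) (fun _ => j))

/-- The canonical copy of `(⊗̂^N_s X) ⊗̂ Y` inside the dual of `((⊗̂^N X) ⊗̂ Y)^*`:
the closed linear span of the elementary tensors `θ_N(j) ⊗ k` (by polarization, the
diagonal tensors `θ_N(j)` span a dense subspace of `⊗̂^N_s X`). -/
noncomputable def tensorSpan (N : ℕ) (X Y : Type*) [NormedAddCommGroup X] [NormedSpace ℂ X]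
    [NormedAddCommGroup Y] [NormedSpace ℂ Y] :
    Submodule ℂ
      (StrongDual ℂ (ContinuousMultilinearMap ℂ (fun _ : Fin N => X) (Y →L[ℂ] ℂ))) :=
  (Submodule.span ℂ (Set.range (fun p : X × Y => deltaTensor N p.1 p.2))).topologicalClosure

noncomputable instance instNormedAddCommGroupCMMDual (N : ℕ) (X Y : Type*) [NormedAddCommGroup X]
    [NormedSpace ℂ X] [NormedAddCommGroup Y] [NormedSpace ℂ Y] :
    NormedAddCommGroup (ContinuousMultilinearMap ℂ (fun _ : Fin N => X) (Y →L[ℂ] ℂ)) :=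
  inferInstance

noncomputable instance instNormedSpaceCMMDual (N : ℕ) (X Y : Type*) [NormedAddCommGroup X]
    [NormedSpace ℂ X] [NormedAddCommGroup Y] [NormedSpace ℂ Y] :
    NormedSpace ℂ (ContinuousMultilinearMap ℂ (fun _ : Fin N => X) (Y →L[ℂ] ℂ)) :=
  inferInstance

section Aux

variable (N : ℕ) {X Y : Type*} [NormedAddCommGroup X] [NormedSpace ℂ X]
  [NormedAddCommGroup Y] [NormedSpace ℂ Y]

/-- Evaluation functional at `(v, y)`. -/
noncomputable def evTensor (v : Fin N → X) (y : Y) :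
    StrongDual ℂ (ContinuousMultilinearMap ℂ (fun _ : Fin N => X) (Y →L[ℂ] ℂ)) :=
  (ContinuousLinearMap.apply ℂ ℂ y).comp
    (ContinuousMultilinearMap.apply ℂ (fun _ : Fin N => X) (Y →L[ℂ] ℂ) v)

@[simp] lemma evTensor_apply (v : Fin N → X) (y : Y)
    (T : ContinuousMultilinearMap ℂ (fun _ : Fin N => X) (Y →L[ℂ] ℂ)) :
    evTensor N v y T = T v y := rfl

lemma norm_evTensor_le (v : Fin N → X) (y : Y) :
    ‖evTensor N v y‖ ≤ (∏ i, ‖v i‖) * ‖y‖ := by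
  refine ContinuousLinearMap.opNorm_le_bound _ (by positivity) fun T => ?_
  calc ‖evTensor N v y T‖ = ‖T v y‖ := rfl
    _ ≤ ‖T v‖ * ‖y‖ := (T v).le_opNorm y
    _ ≤ (‖T‖ * ∏ i, ‖v i‖) * ‖y‖ := by
        gcongr
        exact T.le_opNorm v
    _ = (∏ i, ‖v i‖) * ‖y‖ * ‖T‖ := by ring

lemma evTensor_add_right (v : Fin N → X) (y y' : Y) :
    evTensor N v (y + y') = evTensor N v y + evTensor N v y' := by
  ext T; simp

lemma evTensor_smul_right (v : Fin N → X) (c : ℂ) (y : Y) :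
    evTensor N v (c • y) = c • evTensor N v y := by
  ext T; simp

variable (Φ : StrongDual ℂ
    (StrongDual ℂ (ContinuousMultilinearMap ℂ (fun _ : Fin N => X) (Y →L[ℂ] ℂ))))

/-- The underlying multilinear map `v ↦ Φ (evTensor v y)`. -/
noncomputable def baseML (y : Y) : MultilinearMap ℂ (fun _ : Fin N => X) ℂ where
  toFun v := Φ (evTensor N v y)
  map_update_add' := by
    intro dec v i x x'
    have h : evTensor N (Function.update v i (x + x')) y
        = evTensor N (Function.update v i x) y + evTensor N (Function.update v i x') y := by
      ext T
      simp [ContinuousMultilinearMap.map_update_add]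
    show Φ (evTensor N (Function.update v i (x + x')) y) = _
    rw [h, map_add]
  map_update_smul' := by
    intro dec v i c x
    have h : evTensor N (Function.update v i (c • x)) y
        = c • evTensor N (Function.update v i x) y := by
      ext T
      simp [ContinuousMultilinearMap.map_update_smul]
    show Φ (evTensor N (Function.update v i (c • x)) y) = _
    rw [h, map_smul]

/-- `v ↦ Φ (evTensor (v ∘ σ) y)` as a continuous multilinear map. -/
noncomputable def QA (σ : Equiv.Perm (Fin N)) (y : Y) :
    ContinuousMultilinearMap ℂ (fun _ : Fin N => X) ℂ :=
  ((baseML N Φ y).domDomCongr σ).mkContinuous (‖Φ‖ * ‖y‖) (by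
    intro v
    calc ‖Φ (evTensor N (fun i => v (σ i)) y)‖
        ≤ ‖Φ‖ * ‖evTensor N (fun i => v (σ i)) y‖ := Φ.le_opNorm _
      _ ≤ ‖Φ‖ * ((∏ i, ‖v (σ i)‖) * ‖y‖) := by
          gcongr
          exact norm_evTensor_le N _ y
      _ = ‖Φ‖ * ‖y‖ * ∏ i, ‖v (σ i)‖ := by ring
      _ = ‖Φ‖ * ‖y‖ * ∏ i, ‖v i‖ := by rw [Equiv.prod_comp σ (fun i => ‖v i‖)])

@[simp] lemma QA_apply (σ : Equiv.Perm (Fin N)) (y : Y) (v : Fin N → X) :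
    QA N Φ σ y v = Φ (evTensor N (fun i => v (σ i)) y) := rfl

lemma norm_QA_le (σ : Equiv.Perm (Fin N)) (y : Y) : ‖QA N Φ σ y‖ ≤ ‖Φ‖ * ‖y‖ :=
  MultilinearMap.mkContinuous_norm_le _ (by positivity) _

/-- The symmetrization `Σ_σ QA σ y`. -/
noncomputable def Qp (y : Y) : ContinuousMultilinearMap ℂ (fun _ : Fin N => X) ℂ :=
  ∑ σ : Equiv.Perm (Fin N), QA N Φ σ y

lemma Qp_apply (y : Y) (v : Fin N → X) :
    Qp N Φ y v = ∑ σ : Equiv.Perm (Fin N), Φ (evTensor N (fun i => v (σ i)) y) := by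
  simp [Qp, ContinuousMultilinearMap.sum_apply]

lemma Qp_comp_perm (y : Y) (τ : Equiv.Perm (Fin N)) (v : Fin N → X) :
    Qp N Φ y (v ∘ τ) = Qp N Φ y v := by
  rw [Qp_apply, Qp_apply]
  exact Fintype.sum_bijective (τ * ·) (Group.mulLeft_bijective τ) _ _ (fun σ => by
    congr 1)

lemma Qp_const (y : Y) (x : X) :
    Qp N Φ y (fun _ => x) = (Nat.factorial N : ℂ) * Φ (deltaTensor N x y) := by
  rw [Qp_apply]
  have : ∀ σ : Equiv.Perm (Fin N),
      Φ (evTensor N (fun i => (fun _ : Fin N => x) (σ i)) y) = Φ (deltaTensor N x y) := by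
    intro σ; rfl
  rw [Finset.sum_congr rfl (fun σ _ => this σ), Finset.sum_const, Finset.card_univ,
    Fintype.card_perm, nsmul_eq_mul, Fintype.card_fin]

lemma Qp_add (y y' : Y) : Qp N Φ (y + y') = Qp N Φ y + Qp N Φ y' := by
  ext v
  simp [Qp_apply, evTensor_add_right, map_add, Finset.sum_add_distrib]

lemma Qp_smul (c : ℂ) (y : Y) : Qp N Φ (c • y) = c • Qp N Φ y := by
  ext v
  simp [Qp_apply, evTensor_smul_right, map_smul, Finset.mul_sum]

lemma norm_Qp_le (y : Y) : ‖Qp N Φ y‖ ≤ (Nat.factorial N : ℝ) * ‖Φ‖ * ‖y‖ := by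
  calc ‖Qp N Φ y‖ ≤ ∑ σ : Equiv.Perm (Fin N), ‖QA N Φ σ y‖ := norm_sum_le _ _
    _ ≤ ∑ _σ : Equiv.Perm (Fin N), ‖Φ‖ * ‖y‖ :=
        Finset.sum_le_sum (fun σ _ => norm_QA_le N Φ σ y)
    _ = (Nat.factorial N : ℝ) * ‖Φ‖ * ‖y‖ := by
        rw [Finset.sum_const, Finset.card_univ, Fintype.card_perm, nsmul_eq_mul,
          Fintype.card_fin]; ring

/-- `y ↦ Ψ (Qp Φ y)` as a continuous linear functional on `Y`. -/
noncomputable def QpFunc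
    (Ψ : StrongDual ℂ (ContinuousMultilinearMap ℂ (fun _ : Fin N => X) ℂ)) :
    Y →L[ℂ] ℂ :=
  LinearMap.mkContinuous
    { toFun := fun y => Ψ (Qp N Φ y)
      map_add' := fun y y' => by
        show Ψ (Qp N Φ (y + y')) = Ψ (Qp N Φ y) + Ψ (Qp N Φ y')
        rw [Qp_add, map_add]
      map_smul' := fun c y => by
        show Ψ (Qp N Φ (c • y)) = (RingHom.id ℂ) c • Ψ (Qp N Φ y)
        rw [Qp_smul, map_smul]
        rfl }
    (‖Ψ‖ * ((Nat.factorial N : ℝ) * ‖Φ‖)) (by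
      intro y
      calc ‖Ψ (Qp N Φ y)‖ ≤ ‖Ψ‖ * ‖Qp N Φ y‖ := Ψ.le_opNorm _
        _ ≤ ‖Ψ‖ * ((Nat.factorial N : ℝ) * ‖Φ‖ * ‖y‖) := by
            gcongr
            exact norm_Qp_le N Φ y
        _ = ‖Ψ‖ * ((Nat.factorial N : ℝ) * ‖Φ‖) * ‖y‖ := by ring)

@[simp] lemma QpFunc_apply
    (Ψ : StrongDual ℂ (ContinuousMultilinearMap ℂ (fun _ : Fin N => X) ℂ)) (y : Y) :
    QpFunc N Φ Ψ y = Ψ (Qp N Φ y) := rfl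

end Aux

/-- If `X` has the `P_N` Dunford–Pettis property (in the form: weakly null sequences of
`N`-homogeneous polynomials tend to `0` along `P_N`-weakly convergent sequences), then for
every Banach space `Y`, every weakly compact set `K ⊆ Y` and every `P_N`-weakly compact set
`J ⊆ X`, the set `θ_N(J) ⊗ K` is relatively weakly compact in `(⊗̂^N_s X) ⊗̂ Y`
(weak compactness being stated sequentially, as is permitted by the Eberlein–Šmulian
theorem). -/
theorem rel_weakly_compact_theta_tensor {X : Type*} [NormedAddCommGroup X]
    [NormedSpace ℂ X] [CompleteSpace X] (N : ℕ) (hN : 0 < N)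
    (hDP : ∀ (P : ℕ → ContinuousMultilinearMap ℂ (fun _ : Fin N => X) ℂ),
      (∀ n (σ : Equiv.Perm (Fin N)) (v : Fin N → X), P n (v ∘ σ) = P n v) →
      (∀ Φ : StrongDual ℂ (ContinuousMultilinearMap ℂ (fun _ : Fin N => X) ℂ),
        Tendsto (fun n => Φ (P n)) atTop (𝓝 0)) →
      ∀ (x : ℕ → X) (x₀ : X),
        (∀ M : ℕ, 1 ≤ M → M ≤ N →
          ∀ A : ContinuousMultilinearMap ℂ (fun _ : Fin M => X) ℂ,
            Tendsto (fun n => A (fun _ => x n)) atTop (𝓝 (A (fun _ => x₀)))) →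
        Tendsto (fun n => P n (fun _ => x n)) atTop (𝓝 0))
    {Y : Type*} [NormedAddCommGroup Y] [NormedSpace ℂ Y] [CompleteSpace Y]
    (K : Set Y)
    (hK : ∀ k : ℕ → Y, (∀ n, k n ∈ K) → ∃ ψ : ℕ → ℕ, StrictMono ψ ∧ ∃ k₀ ∈ K,
      ∀ φ : Y →L[ℂ] ℂ, Tendsto (fun n => φ (k (ψ n))) atTop (𝓝 (φ k₀)))
    (J : Set X)
    (hJ : ∀ j : ℕ → X, (∀ n, j n ∈ J) → ∃ ψ : ℕ → ℕ, StrictMono ψ ∧ ∃ j₀ ∈ J,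
      ∀ M : ℕ, 1 ≤ M → M ≤ N →
        ∀ A : ContinuousMultilinearMap ℂ (fun _ : Fin M => X) ℂ,
          Tendsto (fun n => A (fun _ => j (ψ n))) atTop (𝓝 (A (fun _ => j₀)))) :
    ∀ (j : ℕ → X) (k : ℕ → Y), (∀ n, j n ∈ J) → (∀ n, k n ∈ K) →
      ∃ ψ : ℕ → ℕ, StrictMono ψ ∧
        ∃ w ∈ tensorSpan N X Y,
          ∀ Φ : StrongDual ℂ
              (StrongDual ℂ
                (ContinuousMultilinearMap ℂ (fun _ : Fin N => X) (Y →L[ℂ] ℂ))),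
            Tendsto (fun n => Φ (deltaTensor N (j (ψ n)) (k (ψ n)))) atTop (𝓝 (Φ w)) := by
  
  intro j k hj hk
  obtain ⟨ψ₁, hψ₁, j₀, hj₀J, hj₀⟩ := hJ j hj
  obtain ⟨ψ₂, hψ₂, k₀, hk₀K, hk₀⟩ := hK (fun n => k (ψ₁ n)) (fun n => hk _)
  refine ⟨ψ₁ ∘ ψ₂, hψ₁.comp hψ₂, deltaTensor N j₀ k₀,
    Submodule.le_topologicalClosure _ (Submodule.subset_span ⟨(j₀, k₀), rfl⟩), ?_⟩
  intro Φ
  have hjj : ∀ M : ℕ, 1 ≤ M → M ≤ N →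
      ∀ A : ContinuousMultilinearMap ℂ (fun _ : Fin M => X) ℂ,
        Tendsto (fun n => A (fun _ => j (ψ₁ (ψ₂ n)))) atTop (𝓝 (A (fun _ => j₀))) :=
    fun M h1 h2 A => (hj₀ M h1 h2 A).comp hψ₂.tendsto_atTop
  set Pn : ℕ → ContinuousMultilinearMap ℂ (fun _ : Fin N => X) ℂ :=
    fun n => Qp N Φ (k (ψ₁ (ψ₂ n))) - Qp N Φ k₀ with hPn
  have hsym : ∀ n (σ : Equiv.Perm (Fin N)) (v : Fin N → X), Pn n (v ∘ σ) = Pn n v := by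
    intro n σ v
    simp only [hPn, ContinuousMultilinearMap.sub_apply, Qp_comp_perm]
  have hwn : ∀ Ψ : StrongDual ℂ (ContinuousMultilinearMap ℂ (fun _ : Fin N => X) ℂ),
      Tendsto (fun n => Ψ (Pn n)) atTop (𝓝 0) := by
    intro Ψ
    have h := (hk₀ (QpFunc N Φ Ψ)).sub_const (QpFunc N Φ Ψ k₀)
    rw [sub_self] at h
    simpa only [hPn, map_sub, QpFunc_apply] using h
  have key1 := hDP Pn hsym hwn (fun n => j (ψ₁ (ψ₂ n))) j₀ hjj
  have key2 := hjj N hN le_rfl (Qp N Φ k₀)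
  have key3 : Tendsto (fun n => Qp N Φ (k (ψ₁ (ψ₂ n))) (fun _ => j (ψ₁ (ψ₂ n)))) atTop
      (𝓝 (Qp N Φ k₀ (fun _ => j₀))) := by
    have h := key1.add key2
    rw [zero_add] at h
    simpa only [hPn, ContinuousMultilinearMap.sub_apply, sub_add_cancel] using h
  have hfac : ((Nat.factorial N : ℂ)) ≠ 0 := Nat.cast_ne_zero.mpr (Nat.factorial_ne_zero N)
  have hconst : ∀ (y : Y) (x : X),
      Φ (deltaTensor N x y) = (Nat.factorial N : ℂ)⁻¹ * Qp N Φ y (fun _ => x) := by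
    intro y x
    rw [Qp_const, inv_mul_cancel_left₀ hfac]
  have := key3.const_mul ((Nat.factorial N : ℂ)⁻¹)
  simp only [Function.comp_apply]
  simp only [hconst]
  exact this
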